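/- Let p, q ∈ (0,1), let z ∈ ℂ with Im z > 0 and z ∉ {0, 1}, and define m_M(z) = (z + (p + q − 2) + √(z² − 2(p + q − 2pq)z + (p − q)²)) / (2z(1 − z)) (principal square root, with the branch chosen so that Im m_M(z) > 0). Then whenever z·m_M(z) ≠ 0 and z − (1 + (1−p)/(z·m_M(z))) ≠ 0, m_M satisfies the implicit equation m_M(z) = −(1−q)/z − q/(z − (1 + (1−p)/(z·m_M(z)))). -/

import Mathlib

lemma sq_cpow_half (c : ℂ) : (c ^ ((1 : ℂ) / 2)) ^ 2 = c := by
  by_cases hc : c = 0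
  · rw [hc, Complex.zero_cpow (by norm_num)]; ring
  · rw [sq, ← Complex.cpow_add _ _ hc]
    norm_num

/-- The Stieltjes transform `m_M` of the MANOVA distribution satisfies the
self-consistent equation `m = −(1−q)/z − q/(z − (1 + (1−p)/(z m)))`. -/
theorem mM_satisfies_implicit_equation (p q : ℝ)
    (hp : p ∈ Set.Ioo (0 : ℝ) 1) (hq : q ∈ Set.Ioo (0 : ℝ) 1)
    (z : ℂ) (hz : 0 < z.im) (hz0 : z ≠ 0) (hz1 : z ≠ 1)
    (m : ℂ)
    (hm : m = (z + ((p : ℂ) + q - 2) +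
        (z ^ 2 - 2 * ((p : ℂ) + q - 2 * p * q) * z + ((p : ℂ) - q) ^ 2) ^ ((1 : ℂ) / 2)) /
        (2 * z * (1 - z)))
    (hmim : 0 < m.im)
    (hzm : z * m ≠ 0)
    (hden : z - (1 + (1 - (p : ℂ)) / (z * m)) ≠ 0) :
    m = -(1 - (q : ℂ)) / z - (q : ℂ) / (z - (1 + (1 - (p : ℂ)) / (z * m))) := by
  have hz1' : (1 : ℂ) - z ≠ 0 := sub_ne_zero.mpr (Ne.symm hz1)
  have h2 : (2 : ℂ) * z * (1 - z) ≠ 0 := by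
    simp [hz0, hz1', mul_ne_zero]
  set s := (z ^ 2 - 2 * ((p : ℂ) + q - 2 * p * q) * z + ((p : ℂ) - q) ^ 2) ^ ((1 : ℂ) / 2) with hs
  have hs2 : s ^ 2 = z ^ 2 - 2 * ((p : ℂ) + q - 2 * p * q) * z + ((p : ℂ) - q) ^ 2 :=
    sq_cpow_half _
  have hlin : 2 * z * (1 - z) * m = z + ((p : ℂ) + q - 2) + s := by
    rw [hm]; field_simp
  have key : (2 * z * (1 - z) * m - (z + ((p : ℂ) + q - 2))) ^ 2
      = z ^ 2 - 2 * ((p : ℂ) + q - 2 * p * q) * z + ((p : ℂ) - q) ^ 2 := by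
    rw [hlin]; simpa using hs2
  have hP : z * m * (z * m * (z - 1) - (1 - (p : ℂ)))
      + (1 - (q : ℂ)) * (z * m * (z - 1) - (1 - (p : ℂ))) + q * z ^ 2 * m = 0 := by
    have h4 : (4 : ℂ) * (1 - z) ≠ 0 := by
      simp [hz1']
    have h : (4 * (1 - z)) * (z * m * (z * m * (z - 1) - (1 - (p : ℂ)))
        + (1 - (q : ℂ)) * (z * m * (z - 1) - (1 - (p : ℂ))) + q * z ^ 2 * m) = 0 := by
      linear_combination (-1 : ℂ) * key
    exact (mul_eq_zero.mp h).resolve_left h4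
  have hd : z * m * (z - 1) - (1 - (p : ℂ)) ≠ 0 := by
    intro h
    apply hden
    have : (1 - (p : ℂ)) / (z * m) = z - 1 := by
      field_simp [right_ne_zero_of_mul hzm]
      linear_combination -h
    rw [this]; ring
  have hrw : z - (1 + (1 - (p : ℂ)) / (z * m))
      = (z * m * (z - 1) - (1 - (p : ℂ))) / (z * m) := by
    field_simp [right_ne_zero_of_mul hzm]; ring
  rw [hrw, div_div_eq_mul_div]
  set D := z * m * (z - 1) - (1 - (p : ℂ)) with hD
  field_simp [hd, right_ne_zero_of_mul hzm]
  linear_combination hP
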